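/- An n×n correlation matrix C has c² + σ² = 1 if and only if C = x·xᵀ for some vector x ∈ ℝⁿ with all entries ±1. In particular, such C has largest eigenvalue n and all other eigenvalues 0. -/

import Mathlib

theorem quad3 {n : ℕ} {C : Matrix (Fin n) (Fin n) ℝ} (hpsd : C.PosSemidef)
    (i j k : Fin n) (a b c : ℝ) :
    0 ≤ a*a*C i i + b*b*C j j + c*c*C k k + 2*(a*b*C i j) + 2*(a*c*C i k) + 2*(b*c*C j k) := by
  have h := hpsd.dotProduct_mulVec_nonneg (Pi.single i a + Pi.single j b + Pi.single k c : Fin n → ℝ)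
  simp only [star_trivial, Matrix.mulVec_add, Matrix.mulVec_single, dotProduct_add,
    add_dotProduct, single_dotProduct, Pi.add_apply, Pi.smul_apply, Matrix.col_apply,
    MulOpposite.smul_eq_mul_unop, MulOpposite.unop_op] at h
  have hsym : ∀ p q : Fin n, C q p = C p q := fun p q => by simpa using hpsd.1.apply p q
  rw [hsym i j, hsym i k, hsym j k] at h
  linarith

theorem quad2 {n : ℕ} {C : Matrix (Fin n) (Fin n) ℝ} (hpsd : C.PosSemidef)
    (i j : Fin n) (a b : ℝ) :
    0 ≤ a*a*C i i + b*b*C j j + 2*(a*b*C i j) := by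
  have h := hpsd.dotProduct_mulVec_nonneg (Pi.single i a + Pi.single j b : Fin n → ℝ)
  simp only [star_trivial, Matrix.mulVec_add, Matrix.mulVec_single, dotProduct_add,
    add_dotProduct, single_dotProduct, Pi.add_apply, Pi.smul_apply, Matrix.col_apply,
    MulOpposite.smul_eq_mul_unop, MulOpposite.unop_op] at h
  have hsym : ∀ p q : Fin n, C q p = C p q := fun p q => by simpa using hpsd.1.apply p q
  rw [hsym i j] at h
  linarith

theorem cnt (n : ℕ) (hn : 2 ≤ n) :
    ∑ i : Fin n, ∑ _j ∈ Finset.univ.filter (fun j => j < i), (1:ℝ)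
      = (n : ℝ) * ((n:ℝ) - 1) / 2 := by
  have h1 : ∀ i : Fin n, Finset.univ.filter (fun j => j < i) = Finset.Iio i := by
    intro i; ext j; simp
  have h2 : ∑ i : Fin n, ∑ _j ∈ Finset.univ.filter (fun j => j < i), (1:ℝ)
      = ∑ i : Fin n, (i.val : ℝ) := by
    refine Finset.sum_congr rfl fun i _ => ?_
    rw [h1, Finset.sum_const, Fin.card_Iio, nsmul_eq_mul, mul_one]
  rw [h2]
  have h3 : ∑ i : Fin n, (i.val : ℝ) = ((∑ i ∈ Finset.range n, i : ℕ) : ℝ) := by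
    push_cast
    rw [Fin.sum_univ_eq_sum_range (fun j => (j : ℝ))]
  rw [h3]
  have h5 : ((∑ i ∈ Finset.range n, i) * 2 : ℕ) = ((n * (n-1) : ℕ)) :=
    Finset.sum_range_id_mul_two n
  have h6 : (((∑ i ∈ Finset.range n, i) * 2 : ℕ) : ℝ) = ((n:ℝ) * ((n:ℝ)-1)) := by
    rw [h5]; push_cast [Nat.cast_sub (by omega : 1 ≤ n)]; ring
  push_cast at h6 ⊢
  linarith

/-- An n×n correlation matrix has `c²+σ² = 1` iff `C = x·xᵀ` with `x_i = ±1`;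
in that case the spectrum is `{n, 0}` and `n` is attained. -/
theorem stmt_17 (n : ℕ) (hn : 2 ≤ n) (C : Matrix (Fin n) (Fin n) ℝ)
    (hpsd : C.PosSemidef) (hdiag : ∀ i, C i i = 1) :
    ((2 / ((n : ℝ) * ((n : ℝ) - 1))) *
        ∑ i : Fin n, ∑ j ∈ Finset.univ.filter (fun j => j < i), C i j ^ 2 = 1 ↔
      ∃ x : Fin n → ℝ, (∀ i, x i = 1 ∨ x i = -1) ∧ C = Matrix.of fun i j => x i * x j) ∧
    ((2 / ((n : ℝ) * ((n : ℝ) - 1))) *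
        ∑ i : Fin n, ∑ j ∈ Finset.univ.filter (fun j => j < i), C i j ^ 2 = 1 →
      (∃ y : Fin n → ℝ, y ≠ 0 ∧ C.mulVec y = (n : ℝ) • y) ∧
      ∀ (μ : ℝ) (y : Fin n → ℝ), y ≠ 0 → C.mulVec y = μ • y → μ = (n : ℝ) ∨ μ = 0) := by
  have hsym : ∀ p q : Fin n, C q p = C p q := fun p q => by simpa using hpsd.1.apply p q
  have hn1 : (1:ℝ) ≤ (n:ℝ) - 1 := by
    have : (2:ℝ) ≤ (n:ℝ) := by exact_mod_cast hn
    linarith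
  have hNN : ((n:ℝ) * ((n:ℝ) - 1)) ≠ 0 := by positivity
  -- every off-diagonal square is ≤ 1
  have hle : ∀ i j : Fin n, C i j ^ 2 ≤ 1 := by
    intro i j
    have h := quad2 hpsd i j 1 (-C i j)
    rw [hdiag i, hdiag j] at h
    nlinarith [h]
  -- the main equivalence
  have hiff : (2 / ((n : ℝ) * ((n : ℝ) - 1))) *
        ∑ i : Fin n, ∑ j ∈ Finset.univ.filter (fun j => j < i), C i j ^ 2 = 1 ↔
      ∃ x : Fin n → ℝ, (∀ i, x i = 1 ∨ x i = -1) ∧ C = Matrix.of fun i j => x i * x j := by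
    constructor
    · intro hcond
      -- sum equals N
      have hS : ∑ i : Fin n, ∑ j ∈ Finset.univ.filter (fun j => j < i), C i j ^ 2
          = (n : ℝ) * ((n:ℝ) - 1) / 2 := by
        field_simp at hcond
        linarith
      have hzero : ∑ i : Fin n, ∑ j ∈ Finset.univ.filter (fun j => j < i),
          ((1:ℝ) - C i j ^ 2) = 0 := by
        have := cnt n hn
        simp only [Finset.sum_sub_distrib] at *
        rw [this] at *
        linarith
      have hterm : ∀ i : Fin n, ∀ j ∈ Finset.univ.filter (fun j => j < i),
          (1:ℝ) - C i j ^ 2 = 0 := by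
        have houter := (Finset.sum_eq_zero_iff_of_nonneg
          (fun i _ => Finset.sum_nonneg (fun j _ => by
            have := hle i j; linarith))).mp hzero
        intro i j hj
        exact (Finset.sum_eq_zero_iff_of_nonneg
          (fun j _ => by have := hle i j; linarith)).mp (houter i (Finset.mem_univ i)) j hj
      -- all off-diagonal squares are 1
      have hsq : ∀ i j : Fin n, i ≠ j → C i j ^ 2 = 1 := by
        intro i j hij
        rcases lt_or_gt_of_ne hij with h | h
        · have := hterm j i (by simp [h])
          rw [hsym j i]
          linarith
        · have := hterm i j (by simp [h]); linarith
      -- build x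
      set i0 : Fin n := ⟨0, by omega⟩ with hi0
      refine ⟨fun i => if i = i0 then 1 else C i i0, fun i => ?_, ?_⟩
      · by_cases h : i = i0
        · simp [h]
        · simp only [h, if_false]
          have h1 := hsq i i0 h
          have h2 : (C i i0 - 1) * (C i i0 + 1) = 0 := by ring_nf; nlinarith [h1]
          rcases mul_eq_zero.mp h2 with h3 | h3
          · left; linarith
          · right; linarith
      · ext i j
        simp only [Matrix.of_apply]
        by_cases hij : i = j
        · subst hij
          by_cases h : i = i0
          · simp [h, hdiag]
          · simp only [h, if_false, hdiag i]
            have := hsq i i0 h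
            nlinarith [this]
        · by_cases hii0 : i = i0
          · subst hii0
            have hji0 : j ≠ i0 := fun h => hij h.symm
            simp [hji0, hsym j i0]
          · by_cases hji0 : j = i0
            · subst hji0
              simp [hii0]
            · simp only [hii0, hji0, if_false]
              -- need C i j = C i i0 * C j i0
              set a := C i0 i with ha'
              set b := C i0 j with hb'
              set c := C i j with hc'
              have ha : a ^ 2 = 1 := hsq i0 i (fun h => hii0 h.symm)
              have hb : b ^ 2 = 1 := hsq i0 j (fun h => hji0 h.symm)
              have hc : c ^ 2 = 1 := hsq i j hij
              have hq := quad3 hpsd i0 i j 1 (-a) (-b)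
              rw [hdiag i0, hdiag i, hdiag j, ← ha', ← hb', ← hc'] at hq
              have ht2 : (a*b*c)^2 = 1 := by
                have : (a*b*c)^2 = a^2*b^2*c^2 := by ring
                rw [this, ha, hb, hc]; norm_num
              have hpos : 0 < a*b*c + 1 := by nlinarith [hq, ha, hb]
              have ht : a*b*c = 1 := by
                have hfact : (a*b*c - 1) * (a*b*c + 1) = 0 := by linear_combination ht2
                rcases mul_eq_zero.mp hfact with h3 | h3
                · linarith
                · linarith
              have h0 : (c - a*b)^2 = 0 := by linear_combination hc + b^2*ha + hb - 2*ht
              have h1 : c = a*b := by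
                have := sq_eq_zero_iff.mp h0
                linarith [this]
              rw [← hsym i i0, ← hsym j i0, ← ha', ← hb']; exact h1
    · rintro ⟨x, hx, hC⟩
      have hx2 : ∀ i, x i * x i = 1 := by
        intro i; rcases hx i with h | h <;> rw [h] <;> norm_num
      have hterm : ∀ i j : Fin n, C i j ^ 2 = 1 := by
        intro i j
        rw [hC]
        simp only [Matrix.of_apply]
        have := hx2 i; have := hx2 j; nlinarith
      have : ∑ i : Fin n, ∑ j ∈ Finset.univ.filter (fun j => j < i), C i j ^ 2
          = (n : ℝ) * ((n:ℝ) - 1) / 2 := by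
        rw [← cnt n hn]
        exact Finset.sum_congr rfl fun i _ => Finset.sum_congr rfl fun j _ => hterm i j
      rw [this]
      field_simp
  refine ⟨hiff, fun hcond => ?_⟩
  obtain ⟨x, hx, hC⟩ := hiff.mp hcond
  have hx2 : ∀ i, x i * x i = 1 := by
    intro i; rcases hx i with h | h <;> rw [h] <;> norm_num
  have hmv : ∀ y : Fin n → ℝ, C.mulVec y = fun i => x i * ∑ j, x j * y j := by
    intro y
    funext i
    rw [hC]
    simp only [Matrix.mulVec, dotProduct, Matrix.of_apply, Finset.mul_sum]
    exact Finset.sum_congr rfl fun j _ => by ring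
  have hxx : ∑ j, x j * x j = (n : ℝ) := by
    rw [Finset.sum_congr rfl fun j _ => hx2 j]
    simp
  have hx0 : x ≠ 0 := by
    intro h
    have := hx2 ⟨0, by omega⟩
    rw [h] at this
    simp at this
  constructor
  · refine ⟨x, hx0, ?_⟩
    rw [hmv x]
    funext i
    rw [hxx]
    simp [mul_comm]
  · intro μ y hy heq
    by_cases hμ : μ = 0
    · right; exact hμ
    · left
      rw [hmv y] at heq
      set s := ∑ j, x j * y j with hs'
      have hi : ∀ i, x i * s = μ * y i := by
        intro i
        have := congrFun heq i
        simpa using this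
      have hs : s ≠ 0 := by
        intro h0
        apply hy
        funext i
        have := hi i
        rw [h0, mul_zero] at this
        have : y i = 0 := by
          field_simp at this
          exact (mul_eq_zero.mp this.symm).resolve_left hμ
        simpa using this
      have key : (n : ℝ) * s = μ * s := by
        calc (n : ℝ) * s = (∑ j, x j * x j) * s := by rw [hxx]
          _ = ∑ j, x j * (x j * s) := by rw [Finset.sum_mul]; exact Finset.sum_congr rfl fun j _ => by ring
          _ = ∑ j, x j * (μ * y j) := Finset.sum_congr rfl fun j _ => by rw [hi j]
          _ = μ * ∑ j, x j * y j := by rw [Finset.mul_sum]; exact Finset.sum_congr rfl fun j _ => by ring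
          _ = μ * s := rfl
      have := mul_right_cancel₀ hs key
      linarith
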